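/- Let φ₁,…,φ_T ∈ ℝᵈ with ‖φ_t‖₂ ≤ 1 for all t, let λ ≥ 1, and define Λ_t = λI + Σ_{τ<t} φ_τφ_τᵀ. Then Σ_{t=1}^{T} min(1, ‖φ_t‖²_{Λ_t⁻¹}) ≤ 2 log( det(Λ_{T+1}) / det(λI) ) ≤ 2d log(1 + T/λ). -/

import Mathlib

open Matrix Finset

lemma aux_vmv_psd {d : ℕ} (x : Fin d → ℝ) : (vecMulVec x x).PosSemidef := by
  rw [posSemidef_iff_dotProduct_mulVec]
  constructor
  · ext i j; simp [vecMulVec, mul_comm]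
  · intro y
    have h : vecMulVec x x *ᵥ y = (x ⬝ᵥ y) • x := by
      ext i
      simp only [vecMulVec, mulVec, dotProduct, of_apply, Pi.smul_apply, smul_eq_mul,
        Finset.sum_mul]
      exact Finset.sum_congr rfl fun j _ => by ring
    rw [h]
    simp only [star_trivial, dotProduct_smul, smul_eq_mul]
    rw [dotProduct_comm]
    exact mul_self_nonneg _

lemma aux_smul_one_posdef {d : ℕ} {lam : ℝ} (h : 0 < lam) :
    (lam • (1 : Matrix (Fin d) (Fin d) ℝ)).PosDef := by
  have : lam • (1 : Matrix (Fin d) (Fin d) ℝ) = diagonal (fun _ => lam) := by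
    rw [smul_one_eq_diagonal]
  rw [this]
  exact Matrix.posDef_diagonal_iff.mpr (fun _ => h)

lemma aux_min_le_two_log {x : ℝ} (hx : 0 ≤ x) : min 1 x ≤ 2 * Real.log (1 + x) := by
  rcases le_or_gt x 1 with h | h
  · rw [min_eq_right h]
    have h2 : Real.exp (x / 2) ≤ 1 + x := by
      have h3 : Real.exp (x / 2) ≤ 1 / (1 - x / 2) := by
        rcases eq_or_lt_of_le h with rfl | h
        · norm_num; nlinarith [Real.exp_one_lt_d9, Real.exp_nonneg (1/2:ℝ),
            Real.exp_add (1/2:ℝ) (1/2), sq_nonneg (Real.exp (1/2) - 2)]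
        · have hlt : x / 2 < 1 := by linarith
          have := Real.add_one_le_exp (-(x/2))
          have hpos : 0 < 1 - x / 2 := by linarith
          rw [le_div_iff₀ hpos]
          calc Real.exp (x/2) * (1 - x/2) ≤ Real.exp (x/2) * Real.exp (-(x/2)) := by
                apply mul_le_mul_of_nonneg_left (by linarith) (Real.exp_nonneg _)
            _ = 1 := by rw [← Real.exp_add]; simp
      have h4 : 1 / (1 - x / 2) ≤ 1 + x := by
        rcases eq_or_lt_of_le h with rfl | h
        · norm_num
        · have hpos : 0 < 1 - x / 2 := by linarith
          rw [div_le_iff₀ hpos]; nlinarith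
      linarith
    have := (Real.le_log_iff_exp_le (by linarith : (0:ℝ) < 1 + x)).mpr h2
    linarith
  · rw [min_eq_left h.le]
    have h2 : Real.exp (1/2 : ℝ) ≤ 2 := by
      nlinarith [Real.exp_one_lt_d9, Real.exp_pos (1/2:ℝ), Real.exp_add (1/2:ℝ) (1/2)]
    have := (Real.le_log_iff_exp_le (by linarith : (0:ℝ) < 1 + x)).mpr
      (h2.trans (by linarith))
    linarith

lemma aux_det_step {d : ℕ} (A : Matrix (Fin d) (Fin d) ℝ) (hA : A.PosDef) (u : Fin d → ℝ) :
    (A + vecMulVec u u).det = A.det * (1 + u ⬝ᵥ (A⁻¹ *ᵥ u)) := by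
  rw [vecMulVec_eq (Fin 1), det_add_mul _ _ hA.det_pos.ne'.isUnit]
  have h : (1 + replicateRow (Fin 1) u * A⁻¹ * replicateCol (Fin 1) u).det = 1 + u ⬝ᵥ (A⁻¹ *ᵥ u) := by
    rw [det_fin_one]
    simp only [Matrix.add_apply, Matrix.one_apply_eq, Matrix.mul_apply, Matrix.replicateRow_apply,
      Matrix.replicateCol_apply, mulVec, dotProduct]
    congr 1
    calc ∑ x : Fin d, (∑ y : Fin d, u y * A⁻¹ y x) * u x
        = ∑ x : Fin d, ∑ y : Fin d, u y * A⁻¹ y x * u x :=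
          Finset.sum_congr rfl fun j _ => by rw [Finset.sum_mul]
      _ = ∑ y : Fin d, ∑ x : Fin d, u y * A⁻¹ y x * u x := Finset.sum_comm
      _ = ∑ y : Fin d, u y * ∑ x : Fin d, A⁻¹ y x * u x :=
          Finset.sum_congr rfl fun j _ => by
            rw [Finset.mul_sum]; exact Finset.sum_congr rfl fun k _ => by ring
  exact congrArg (A.det * ·) h

lemma aux_det_le {d T : ℕ} {lam : ℝ} (hlam : 1 ≤ lam) (φ : ℕ → Fin d → ℝ)
    (hφ : ∀ t, φ t ⬝ᵥ φ t ≤ 1)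
    {M : Matrix (Fin d) (Fin d) ℝ}
    (hM : M = lam • (1 : Matrix (Fin d) (Fin d) ℝ) + ∑ τ ∈ range T, vecMulVec (φ τ) (φ τ))
    (hMpd : M.PosDef) :
    M.det ≤ (lam + T) ^ d := by
  have hH := hMpd.isHermitian
  have hdet : M.det = ∏ i, hH.eigenvalues i := by
    simpa using hH.det_eq_prod_eigenvalues
  rw [hdet]
  have hbound : ∀ i, hH.eigenvalues i ≤ lam + T := by
    intro i
    set v : Fin d → ℝ := ⇑(hH.eigenvectorBasis i) with hv
    have hnorm : v ⬝ᵥ v = 1 := by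
      have h1 := hH.eigenvectorBasis.orthonormal.1 i
      have h2 : (inner (𝕜 := ℝ) (hH.eigenvectorBasis i) (hH.eigenvectorBasis i)) = v ⬝ᵥ v := by
        rw [EuclideanSpace.inner_eq_star_dotProduct]; rfl
      have h3 := real_inner_self_eq_norm_sq (hH.eigenvectorBasis i)
      rw [h2] at h3
      rw [h3, h1]; norm_num
    have heig : hH.eigenvalues i = v ⬝ᵥ (M *ᵥ v) := by
      have := hH.eigenvalues_eq i
      simpa using this
    rw [heig, hM, add_mulVec, dotProduct_add, smul_mulVec, one_mulVec,
      dotProduct_smul, smul_eq_mul, hnorm, mul_one]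
    have hterm : ∀ τ, v ⬝ᵥ (vecMulVec (φ τ) (φ τ) *ᵥ v) ≤ 1 := by
      intro τ
      have hmv : vecMulVec (φ τ) (φ τ) *ᵥ v = (φ τ ⬝ᵥ v) • φ τ := by
        ext j
        simp only [vecMulVec, mulVec, dotProduct, of_apply, Pi.smul_apply, smul_eq_mul,
          Finset.sum_mul]
        exact Finset.sum_congr rfl fun k _ => by ring
      rw [hmv, dotProduct_smul, smul_eq_mul]
      have hcs : (φ τ ⬝ᵥ v) ^ 2 ≤ (φ τ ⬝ᵥ φ τ) * (v ⬝ᵥ v) := by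
        simpa [dotProduct, pow_two] using
          Finset.sum_mul_sq_le_sq_mul_sq Finset.univ (φ τ) v
      have hc : v ⬝ᵥ φ τ = φ τ ⬝ᵥ v := dotProduct_comm _ _
      rw [hc]
      nlinarith [hcs, hφ τ, hnorm]
    calc lam + v ⬝ᵥ ((∑ τ ∈ range T, vecMulVec (φ τ) (φ τ)) *ᵥ v)
        = lam + ∑ τ ∈ range T, v ⬝ᵥ (vecMulVec (φ τ) (φ τ) *ᵥ v) := by
          congr 1
          have hs : (∑ τ ∈ range T, vecMulVec (φ τ) (φ τ)) *ᵥ v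
              = ∑ τ ∈ range T, (vecMulVec (φ τ) (φ τ)) *ᵥ v := by
            ext j
            simp only [mulVec, dotProduct, Finset.sum_apply, Matrix.sum_apply, Finset.sum_mul]
            rw [Finset.sum_comm]
          rw [hs]
          simp only [dotProduct, Finset.sum_apply, Finset.mul_sum]
          rw [Finset.sum_comm]
      _ ≤ lam + ∑ τ ∈ range T, 1 := by
          gcongr with τ hτ
          exact hterm τ
      _ = lam + T := by simp
  calc ∏ i, hH.eigenvalues i ≤ ∏ _i : Fin d, (lam + T) := by
        apply Finset.prod_le_prod
        · exact fun i _ => hMpd.posSemidef.eigenvalues_nonneg i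
        · exact fun i _ => hbound i
    _ = (lam + T) ^ d := by simp [Finset.prod_const]


/-- Elliptic potential lemma: for `φ₀, …, φ_{T-1} ∈ ℝᵈ` with `‖φ_t‖₂ ≤ 1`, `λ ≥ 1`, and
`Λ_t = λI + Σ_{τ<t} φ_τ φ_τᵀ`,
`Σ_{t<T} min(1, ‖φ_t‖²_{Λ_t⁻¹}) ≤ 2 log(det(Λ_T)/det(λI)) ≤ 2d log(1 + T/λ)`. -/
theorem stmt_10 {d : ℕ} (T : ℕ) (lam : ℝ) (hlam : 1 ≤ lam)
    (φ : ℕ → (Fin d → ℝ)) (hφ : ∀ t, φ t ⬝ᵥ φ t ≤ 1)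
    (Λ : ℕ → Matrix (Fin d) (Fin d) ℝ)
    (hΛ : ∀ t, Λ t = lam • (1 : Matrix (Fin d) (Fin d) ℝ) +
      ∑ τ ∈ Finset.range t, Matrix.vecMulVec (φ τ) (φ τ)) :
    (∑ t ∈ Finset.range T, min 1 (φ t ⬝ᵥ ((Λ t)⁻¹ *ᵥ φ t)) ≤
        2 * Real.log ((Λ T).det / (lam • (1 : Matrix (Fin d) (Fin d) ℝ)).det)) ∧
      2 * Real.log ((Λ T).det / (lam • (1 : Matrix (Fin d) (Fin d) ℝ)).det) ≤
        2 * d * Real.log (1 + T / lam) := by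
  have hlam0 : (0:ℝ) < lam := lt_of_lt_of_le one_pos hlam
  have hsum : ∀ t, (∑ τ ∈ range t, vecMulVec (φ τ) (φ τ)).PosSemidef := by
    intro t
    induction t with
    | zero => simpa using (Matrix.PosSemidef.zero (n := Fin d) (R := ℝ))
    | succ n ih => rw [Finset.sum_range_succ]; exact ih.add (aux_vmv_psd _)
  have hpd : ∀ t, (Λ t).PosDef := by
    intro t; rw [hΛ]
    exact (aux_smul_one_posdef hlam0).add_posSemidef (hsum t)
  have hq0 : ∀ t, 0 ≤ φ t ⬝ᵥ ((Λ t)⁻¹ *ᵥ φ t) := by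
    intro t
    have h := ((hpd t).inv).posSemidef.dotProduct_mulVec_nonneg (φ t)
    simpa using h
  have hstep : ∀ t, (Λ (t+1)).det = (Λ t).det * (1 + φ t ⬝ᵥ ((Λ t)⁻¹ *ᵥ φ t)) := by
    intro t
    have h1 : Λ (t+1) = Λ t + vecMulVec (φ t) (φ t) := by
      rw [hΛ, hΛ, Finset.sum_range_succ, add_assoc]
    rw [h1, aux_det_step _ (hpd t)]
  have hdet0 : (lam • (1 : Matrix (Fin d) (Fin d) ℝ)).det = lam ^ d := by
    simp [Matrix.det_smul]
  have hdet0pos : (0:ℝ) < (lam • (1 : Matrix (Fin d) (Fin d) ℝ)).det := by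
    rw [hdet0]; positivity
  have hprod : ∀ t, (Λ t).det = (lam • (1 : Matrix (Fin d) (Fin d) ℝ)).det *
      ∏ s ∈ range t, (1 + φ s ⬝ᵥ ((Λ s)⁻¹ *ᵥ φ s)) := by
    intro t
    induction t with
    | zero => simp [hΛ 0]
    | succ n ih => rw [Finset.prod_range_succ, hstep n, ih]; ring
  have hratio : (Λ T).det / (lam • (1 : Matrix (Fin d) (Fin d) ℝ)).det =
      ∏ s ∈ range T, (1 + φ s ⬝ᵥ ((Λ s)⁻¹ *ᵥ φ s)) := by
    rw [hprod T, mul_comm, mul_div_assoc, div_self hdet0pos.ne', mul_one]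
  have hfac : ∀ s ∈ range T, (0:ℝ) < 1 + φ s ⬝ᵥ ((Λ s)⁻¹ *ᵥ φ s) := by
    intro s _
    have := hq0 s
    linarith
  constructor
  · calc ∑ t ∈ range T, min 1 (φ t ⬝ᵥ ((Λ t)⁻¹ *ᵥ φ t))
        ≤ ∑ t ∈ range T, 2 * Real.log (1 + φ t ⬝ᵥ ((Λ t)⁻¹ *ᵥ φ t)) :=
          Finset.sum_le_sum fun t _ => aux_min_le_two_log (hq0 t)
      _ = 2 * ∑ t ∈ range T, Real.log (1 + φ t ⬝ᵥ ((Λ t)⁻¹ *ᵥ φ t)) := by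
          rw [Finset.mul_sum]
      _ = 2 * Real.log (∏ t ∈ range T, (1 + φ t ⬝ᵥ ((Λ t)⁻¹ *ᵥ φ t))) := by
          rw [Real.log_prod fun s hs => (hfac s hs).ne']
      _ = 2 * Real.log ((Λ T).det / (lam • (1 : Matrix (Fin d) (Fin d) ℝ)).det) := by
          rw [hratio]
  · have hdetle : (Λ T).det ≤ (lam + T) ^ d :=
      aux_det_le hlam φ hφ (hΛ T) (hpd T)
    have hratiopos : 0 < (Λ T).det / (lam • (1 : Matrix (Fin d) (Fin d) ℝ)).det :=
      div_pos (hpd T).det_pos hdet0pos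
    have hle : (Λ T).det / (lam • (1 : Matrix (Fin d) (Fin d) ℝ)).det ≤ (1 + T / lam) ^ d := by
      rw [hdet0, div_le_iff₀ (by positivity)]
      calc (Λ T).det ≤ (lam + T) ^ d := hdetle
        _ = (1 + T / lam) ^ d * lam ^ d := by
            rw [← mul_pow]
            congr 1
            field_simp
    have hlog := Real.log_le_log hratiopos hle
    rw [Real.log_pow] at hlog
    calc 2 * Real.log ((Λ T).det / (lam • (1 : Matrix (Fin d) (Fin d) ℝ)).det)
        ≤ 2 * (d * Real.log (1 + T / lam)) := by linarith
      _ = 2 * d * Real.log (1 + T / lam) := by ring
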